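/- For a vertex u of a graph G, the vertices (u,0) and (u,1) are connected in the bipartite double cover K^G if and only if the connected component of G containing u contains a cycle of odd length. -/

import Mathlib

/-- The bipartite double cover of a graph `G`: vertices are `V × Bool`, and `(x,i)` is
adjacent to `(y,j)` iff `{x,y} ∈ E(G)` and `i ≠ j`. -/
def doubleCover {V : Type*} (G : SimpleGraph V) : SimpleGraph (V × Bool) where
  Adj a b := G.Adj a.1 b.1 ∧ a.2 ≠ b.2
  symm := ⟨fun _ _ h => ⟨h.1.symm, h.2.symm⟩⟩
  loopless := ⟨fun _ h => h.2 rfl⟩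

/-- Projection homomorphism from the double cover to `G`. -/
def dcHom {V : Type*} (G : SimpleGraph V) : doubleCover G →g G :=
  ⟨Prod.fst, fun h => h.1⟩

lemma dc_parity {V : Type*} (G : SimpleGraph V) :
    ∀ {x y : V × Bool} (W : (doubleCover G).Walk x y), Odd W.length ↔ x.2 ≠ y.2 := by
  intro x y W
  induction W with
  | nil => simp
  | @cons a c b h q ih =>
    have hac : a.2 ≠ c.2 := h.2
    simp only [SimpleGraph.Walk.length_cons, Nat.odd_add_one, ih]
    revert hac
    cases a.2 <;> cases c.2 <;> cases b.2 <;> simp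

lemma dc_lift {V : Type*} (G : SimpleGraph V) :
    ∀ {a b : V} (p : G.Walk a b) (i : Bool),
      (doubleCover G).Reachable (a, i) (b, xor (decide (Odd p.length)) i) := by
  intro a b p
  induction p with
  | nil => intro i; simpa using SimpleGraph.Reachable.refl _
  | @cons a c b h q ih =>
    intro i
    have hadj : (doubleCover G).Adj (a, i) (c, !i) := ⟨h, by cases i <;> simp⟩
    have := ih (!i)
    have key : (xor (decide (Odd q.length)) (!i)) =
        xor (decide (Odd (SimpleGraph.Walk.cons h q).length)) i := by
      simp only [SimpleGraph.Walk.length_cons, Nat.odd_add_one, decide_not]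
      cases (decide (Odd q.length)) <;> cases i <;> simp
    rw [key] at this
    exact (hadj.reachable).trans this

/-- `(u, 0)` and `(u, 1)` are connected in the bipartite double cover of `G` iff the
connected component of `G` containing `u` contains a closed walk of odd length. -/
theorem doubleCover_reachable_iff_odd_closed_walk {V : Type*} (G : SimpleGraph V) (u : V) :
    (doubleCover G).Reachable (u, false) (u, true) ↔
      ∃ v : V, G.Reachable u v ∧ ∃ p : G.Walk v v, Odd p.length := by
  constructor
  · rintro ⟨W⟩
    refine ⟨u, .refl u, W.map (dcHom G), ?_⟩
    have h := (dc_parity G W).2 (by simp)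
    rw [← SimpleGraph.Walk.length_map (dcHom G)] at h
    exact h
  · rintro ⟨v, ⟨q⟩, p, hp⟩
    have hl : Odd (q.append (p.append q.reverse)).length := by
      simp only [SimpleGraph.Walk.length_append, SimpleGraph.Walk.length_reverse]
      obtain ⟨k, hk⟩ := hp
      exact ⟨q.length + k, by omega⟩
    have := dc_lift G (q.append (p.append q.reverse)) false
    have hdec : decide (Odd (q.append (p.append q.reverse)).length) = true := by
      simpa using hl
    rw [hdec] at this
    simpa using this
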